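/- arXiv:2209.01901 — 9 statements merged into one kernel-verified Lean document; each statement's English description precedes it below -/
import Mathlib

section
/- For all points a, b, c in a metric space, real z ≥ 1, and 0 < t ≤ 1, we have |d(a,c)^z − d(b,c)^z| ≤ t · d(a,c)^z + (3z/t)^(z−1) · d(a,b)^z. -/
/-- Hölder-type splitting: `(u+v)^p ≤ λ^(1-p) u^p + (1-λ)^(1-p) v^p`. -/
lemma rpow_add_le_split {u v p lam : ℝ} (hu : 0 ≤ u) (hv : 0 ≤ v) (hp : 1 ≤ p)
    (h0 : 0 < lam) (h1 : lam < 1) :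
    (u + v) ^ p ≤ lam ^ (1 - p) * u ^ p + (1 - lam) ^ (1 - p) * v ^ p := by
  have h2 : (0:ℝ) < 1 - lam := by linarith
  have hx : (0:ℝ) ≤ u / lam := div_nonneg hu h0.le
  have hy : (0:ℝ) ≤ v / (1 - lam) := div_nonneg hv h2.le
  have hc := (convexOn_rpow hp).2 (Set.mem_Ici.2 hx) (Set.mem_Ici.2 hy)
    h0.le h2.le (by ring)
  simp only [smul_eq_mul] at hc
  have e1 : lam * (u / lam) + (1 - lam) * (v / (1 - lam)) = u + v := by
    field_simp
  rw [e1] at hc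
  refine hc.trans_eq ?_
  have d1 : (u / lam) ^ p = u ^ p / lam ^ p := Real.div_rpow hu h0.le p
  have d2 : (v / (1 - lam)) ^ p = v ^ p / (1 - lam) ^ p := Real.div_rpow hv h2.le p
  have s1 : lam ^ (1 - p) = lam / lam ^ p := by
    rw [Real.rpow_sub h0, Real.rpow_one]
  have s2 : (1 - lam) ^ (1 - p) = (1 - lam) / (1 - lam) ^ p := by
    rw [Real.rpow_sub h2, Real.rpow_one]
  rw [d1, d2, s1, s2]
  ring

/-- `(1 - t/(3z))^(1-z) ≤ 1 + t` for `1 ≤ z`, `0 < t ≤ 1`. -/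
lemma key_coeff_bound {z t : ℝ} (hz : 1 ≤ z) (ht0 : 0 < t) (ht1 : t ≤ 1) :
    (1 - t / (3 * z)) ^ (1 - z) ≤ 1 + t := by
  have hz0 : (0:ℝ) < z := by linarith
  set u : ℝ := t / (3 * z) with hu
  have hu0 : 0 < u := div_pos ht0 (by linarith)
  have hu3 : u ≤ 1 / 3 := by
    rw [hu, div_le_div_iff₀ (by linarith) (by norm_num)]
    nlinarith
  have hl0 : (0:ℝ) < 1 - u := by linarith
  -- log bound
  have hlog : Real.log (1 - u)⁻¹ ≤ u / (1 - u) := by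
    have := Real.log_le_sub_one_of_pos (inv_pos.2 hl0)
    calc Real.log (1 - u)⁻¹ ≤ (1 - u)⁻¹ - 1 := this
      _ = u / (1 - u) := by field_simp; ring
  have hlog2 : u / (1 - u) ≤ 3 / 2 * u := by
    rw [div_le_iff₀ hl0]
    nlinarith
  have hlog3 : (z - 1) * Real.log (1 - u)⁻¹ ≤ t / 2 := by
    have h1 : (z - 1) * Real.log (1 - u)⁻¹ ≤ (z - 1) * (3 / 2 * u) := by
      have hlogpos : 0 ≤ Real.log (1 - u)⁻¹ ∨ Real.log (1 - u)⁻¹ < 0 :=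
        le_or_gt 0 _
      nlinarith [hlog.trans hlog2, sub_nonneg.2 hz,
        mul_le_mul_of_nonneg_left (hlog.trans hlog2) (sub_nonneg.2 hz)]
    refine h1.trans ?_
    have : (z - 1) * (3 / 2 * u) = t / 2 * ((z - 1) / z) := by
      rw [hu]; field_simp
    rw [this]
    have hq : (z - 1) / z ≤ 1 := by
      rw [div_le_one hz0]; linarith
    nlinarith
  -- rewrite rpow via exp
  have hrw : (1 - u) ^ (1 - z) = Real.exp ((z - 1) * Real.log (1 - u)⁻¹) := by
    rw [Real.rpow_def_of_pos hl0, Real.log_inv]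
    ring_nf
  rw [hrw]
  have he1 : Real.exp ((z - 1) * Real.log (1 - u)⁻¹) ≤ Real.exp (t / 2) :=
    Real.exp_le_exp.2 hlog3
  refine he1.trans ?_
  -- exp (t/2) ≤ 1/(1 - t/2) ≤ 1 + t
  have h2 : (0:ℝ) < 1 - t / 2 := by linarith
  have h3 : 1 - t / 2 ≤ Real.exp (-(t / 2)) := by
    have := Real.add_one_le_exp (-(t / 2)); linarith
  have h4 : Real.exp (t / 2) ≤ (1 - t / 2)⁻¹ := by
    have := inv_anti₀ h2 h3
    rwa [Real.exp_neg, inv_inv] at this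
  refine h4.trans ?_
  rw [inv_le_iff_one_le_mul₀ h2]
  nlinarith

theorem generalized_triangle_ineq_diff
    {X : Type*} [MetricSpace X] (a b c : X) (z t : ℝ)
    (hz : 1 ≤ z) (ht0 : 0 < t) (ht1 : t ≤ 1) :
    |dist a c ^ z - dist b c ^ z|
      ≤ t * dist a c ^ z + (3 * z / t) ^ (z - 1) * dist a b ^ z := by
  set x := dist a c with hxd
  set y := dist b c with hyd
  set s := dist a b with hsd
  have hx0 : 0 ≤ x := dist_nonneg
  have hy0 : 0 ≤ y := dist_nonneg
  have hs0 : 0 ≤ s := dist_nonneg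
  have hz0 : (0:ℝ) < z := by linarith
  set lam : ℝ := 1 - t / (3 * z) with hlam
  have hu0 : 0 < t / (3 * z) := div_pos ht0 (by linarith)
  have hu3 : t / (3 * z) ≤ 1 / 3 := by
    rw [div_le_div_iff₀ (by linarith) (by norm_num)]
    nlinarith
  have hlam0 : 0 < lam := by rw [hlam]; linarith
  have hlam1 : lam < 1 := by rw [hlam]; linarith
  have hKey : lam ^ (1 - z) ≤ 1 + t := key_coeff_bound hz ht0 ht1
  have h3z : (0:ℝ) < 3 * z / t := div_pos (by linarith) ht0
  have hCoef : (1 - lam) ^ (1 - z) = (3 * z / t) ^ (z - 1) := by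
    have h1 : 1 - lam = (3 * z / t)⁻¹ := by
      rw [hlam]; field_simp; ring
    rw [h1, ← Real.rpow_neg_one (3 * z / t)]
    rw [← Real.rpow_mul h3z.le]
    ring_nf
  have hK0 : 0 ≤ (3 * z / t) ^ (z - 1) := Real.rpow_nonneg h3z.le _
  have hxz0 : 0 ≤ x ^ z := Real.rpow_nonneg hx0 _
  have hyz0 : 0 ≤ y ^ z := Real.rpow_nonneg hy0 _
  have hsz0 : 0 ≤ s ^ z := Real.rpow_nonneg hs0 _
  rw [abs_sub_le_iff]
  constructor
  · -- x^z - y^z ≤ t x^z + K s^z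
    rcases le_or_gt x y with h | h
    · have : x ^ z ≤ y ^ z := Real.rpow_le_rpow hx0 h hz0.le
      nlinarith [mul_nonneg ht0.le hxz0, mul_nonneg hK0 hsz0]
    · have hxy : x ≤ y + s := by
        rw [hxd, hyd, hsd]
        calc dist a c ≤ dist a b + dist b c := dist_triangle a b c
          _ = dist b c + dist a b := by ring
      have hb : x ^ z ≤ (y + s) ^ z := Real.rpow_le_rpow hx0 hxy hz0.le
      have hsplit := rpow_add_le_split hy0 hs0 hz hlam0 hlam1
      rw [hCoef] at hsplit
      have hyx : y ^ z ≤ x ^ z := Real.rpow_le_rpow hy0 h.le hz0.le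
      nlinarith [mul_le_mul_of_nonneg_right hKey hyz0]
  · -- y^z - x^z ≤ t x^z + K s^z
    have hxy : y ≤ x + s := by
      rw [hxd, hyd, hsd]
      calc dist b c ≤ dist b a + dist a c := dist_triangle b a c
        _ = dist a c + dist a b := by rw [dist_comm b a]; ring
    have hb : y ^ z ≤ (x + s) ^ z := Real.rpow_le_rpow hy0 hxy hz0.le
    have hsplit := rpow_add_le_split hx0 hs0 hz hlam0 hlam1
    rw [hCoef] at hsplit
    nlinarith [mul_le_mul_of_nonneg_right hKey hxz0]
end

section
/- Let c be a point in a metric space, r > 0, and suppose G is a set of points with max_{x∈G} d(x,c) = d(p_far, c) and u is a point with d(p_far, c) < (ε/(24z)) · d(u,c) for 0 < ε < 1 and z ≥ 1. Then for every x ∈ G: (a) d(p_far, c) < (ε/(12z)) · d(x,u), and (b) d(x,u)^z ∈ (1 ± ε/6) · d(u,c)^z. -/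
theorem far_center_distance_bounds
    {X : Type*} [MetricSpace X] (c u : X) (z ε : ℝ)
    (hz : 1 ≤ z) (hε0 : 0 < ε) (hε1 : ε < 1)
    (G : Finset X) (pf : X) (hpf : pf ∈ G)
    (hmax : ∀ x ∈ G, dist x c ≤ dist pf c)
    (hfar : dist pf c < (ε / (24 * z)) * dist u c) :
    ∀ x ∈ G,
      dist pf c < (ε / (12 * z)) * dist x u ∧
      (1 - ε / 6) * dist u c ^ z ≤ dist x u ^ z ∧
      dist x u ^ z ≤ (1 + ε / 6) * dist u c ^ z := by
  intro x hx
  have hz0 : (0:ℝ) < z := lt_of_lt_of_le one_pos hz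
  set δ : ℝ := ε / (24 * z) with hδdef
  have hδ0 : 0 < δ := div_pos hε0 (by positivity)
  have hδle : δ ≤ 1 / 24 := by
    rw [hδdef, div_le_div_iff₀ (by positivity) (by norm_num)]
    nlinarith
  have hP0 : (0:ℝ) ≤ dist pf c := dist_nonneg
  have hD0 : (0:ℝ) < dist u c := by nlinarith [hfar]
  have hxc : dist x c ≤ dist pf c := hmax x hx
  have hlo : (1 - δ) * dist u c < dist x u := by
    have h1 : dist u c ≤ dist u x + dist x c := dist_triangle u x c
    rw [dist_comm u x] at h1
    nlinarith
  have hhi : dist x u < (1 + δ) * dist u c := by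
    have h1 : dist x u ≤ dist x c + dist c u := dist_triangle x c u
    rw [dist_comm c u] at h1
    nlinarith
  have hxu0 : (0:ℝ) < dist x u := by nlinarith
  refine ⟨?_, ?_, ?_⟩
  · -- part (a)
    have h2 : ε / (12 * z) = 2 * δ := by
      rw [hδdef]; field_simp; ring
    rw [h2]
    nlinarith
  · -- lower bound
    have hbern : 1 - z * δ ≤ (1 - δ) ^ z := by
      have := one_add_mul_self_le_rpow_one_add (s := -δ) (by linarith) hz
      rw [← sub_eq_add_neg] at this; linarith
    have hzδ : z * δ = ε / 24 := by
      rw [hδdef]; field_simp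
    have hstep : (1 - ε / 6) * dist u c ^ z ≤ ((1 - δ) * dist u c) ^ z := by
      rw [Real.mul_rpow (by linarith) hD0.le]
      have hDz : (0:ℝ) < dist u c ^ z := Real.rpow_pos_of_pos hD0 z
      nlinarith [hbern, hzδ]
    refine hstep.trans ?_
    exact Real.rpow_le_rpow (by nlinarith) hlo.le hz0.le
  · -- upper bound
    have hstep : dist x u ^ z ≤ ((1 + δ) * dist u c) ^ z :=
      Real.rpow_le_rpow hxu0.le hhi.le hz0.le
    refine hstep.trans ?_
    rw [Real.mul_rpow (by linarith) hD0.le]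
    have hDz : (0:ℝ) < dist u c ^ z := Real.rpow_pos_of_pos hD0 z
    have hzδ : z * δ = ε / 24 := by
      rw [hδdef]; field_simp
    have hpow : (1 + δ) ^ z ≤ Real.exp (ε / 24) := by
      rw [Real.rpow_def_of_pos (by linarith)]
      refine Real.exp_le_exp.2 ?_
      have hlog : Real.log (1 + δ) ≤ δ := by
        have := Real.log_le_sub_one_of_pos (x := 1 + δ) (by linarith)
        linarith
      calc Real.log (1 + δ) * z ≤ δ * z := by nlinarith
        _ = ε / 24 := by rw [mul_comm]; exact hzδ
    have hexp : Real.exp (ε / 24) ≤ 1 + ε / 6 := by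
      have h1 : -(ε/24) + 1 ≤ Real.exp (-(ε/24)) := Real.add_one_le_exp _
      have h2 : Real.exp (ε/24) * Real.exp (-(ε/24)) = 1 := by
        rw [← Real.exp_add]; simp
      have h3 := Real.exp_pos (ε/24)
      nlinarith
    nlinarith [hpow.trans hexp]
end

section
/- Let c be a point in a metric space, G a set of points, p_close ∈ G the closest point of G to c, and u a point with d(p_close, c) > (9z/ε) · d(u,c) where z ≥ 1 and 0 < ε < 1. Then for every x ∈ G, d(x,u)^z ∈ (1 ± ε/6) · d(x,c)^z. -/
theorem close_center_distance_bounds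
    {X : Type*} [MetricSpace X] (c u : X) (z ε : ℝ)
    (hz : 1 ≤ z) (hε0 : 0 < ε) (hε1 : ε < 1)
    (G : Finset X) (pc : X) (hpc : pc ∈ G)
    (hmin : ∀ x ∈ G, dist pc c ≤ dist x c)
    (hclose : dist pc c > (9 * z / ε) * dist u c) :
    ∀ x ∈ G,
      (1 - ε / 6) * dist x c ^ z ≤ dist x u ^ z ∧
      dist x u ^ z ≤ (1 + ε / 6) * dist x c ^ z := by
  intro x hx
  have hz0 : (0:ℝ) < z := lt_of_lt_of_le one_pos hz
  set δ : ℝ := ε / (9 * z) with hδ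
  have hδ0 : 0 < δ := div_pos hε0 (by positivity)
  have hδ1 : δ < 1 := by
    rw [hδ, div_lt_one (by positivity)]
    nlinarith
  -- dist pc c > 0
  have hpc0 : 0 < dist pc c := by
    have := dist_nonneg (x := u) (y := c)
    nlinarith [mul_nonneg (by positivity : (0:ℝ) ≤ 9 * z / ε) this]
  have hD : 0 < dist x c := lt_of_lt_of_le hpc0 (hmin x hx)
  -- dist u c < δ * dist x c
  have huc : dist u c < δ * dist x c := by
    have h1 : dist u c < (ε / (9 * z)) * dist pc c := by
      rw [div_mul_eq_mul_div, lt_div_iff₀ (by positivity)]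
      calc dist u c * (9 * z) = (9 * z / ε) * dist u c * ε := by
            field_simp
        _ < dist pc c * ε := by
            exact mul_lt_mul_of_pos_right hclose hε0
        _ = ε * dist pc c := mul_comm _ _
    calc dist u c < δ * dist pc c := h1
      _ ≤ δ * dist x c := by
          exact mul_le_mul_of_nonneg_left (hmin x hx) hδ0.le
  -- bounds on dist x u
  have htri1 : dist x u ≤ (1 + δ) * dist x c := by
    have := dist_triangle x c u
    have : dist x u ≤ dist x c + dist u c := by
      rw [dist_comm u c]; linarith [dist_triangle x c u]
    nlinarith
  have htri2 : (1 - δ) * dist x c ≤ dist x u := by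
    have h := dist_triangle x u c
    nlinarith
  have hxu0 : 0 ≤ dist x u := dist_nonneg
  have hzδ : z * δ = ε / 9 := by rw [hδ]; field_simp
  constructor
  · -- lower bound
    have h1 : (1 - δ) ^ z ≤ dist x u ^ z / dist x c ^ z → True := fun _ => trivial
    have hb : 1 - ε / 9 ≤ (1 - δ) ^ z := by
      have := one_add_mul_self_le_rpow_one_add (s := -δ) (by linarith) hz
      have h2 : 1 + z * (-δ) = 1 - ε / 9 := by rw [mul_neg, hzδ]; ring
      rw [h2] at this
      rw [show (1:ℝ) - δ = 1 + -δ by ring]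
      exact this
    have hrle : ((1 - δ) * dist x c) ^ z ≤ dist x u ^ z :=
      Real.rpow_le_rpow (mul_nonneg (by linarith) hD.le) htri2 hz0.le
    rw [Real.mul_rpow (by linarith) hD.le] at hrle
    have : (1 - ε / 6) ≤ (1 - δ) ^ z := by linarith
    calc (1 - ε / 6) * dist x c ^ z ≤ (1 - δ) ^ z * dist x c ^ z := by
          exact mul_le_mul_of_nonneg_right this (by positivity)
      _ ≤ dist x u ^ z := hrle
  · -- upper bound
    have hrle : dist x u ^ z ≤ ((1 + δ) * dist x c) ^ z :=
      Real.rpow_le_rpow hxu0 htri1 hz0.le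
    rw [Real.mul_rpow (by linarith) hD.le] at hrle
    have hb : (1 + δ) ^ z ≤ 1 + ε / 6 := by
      have hlog : Real.log (1 + δ) ≤ δ := by
        have := Real.log_le_sub_one_of_pos (x := 1 + δ) (by linarith)
        linarith
      have h1 : (1 + δ) ^ z = Real.exp (z * Real.log (1 + δ)) := by
        rw [Real.rpow_def_of_pos (by linarith), mul_comm]
      have h2 : (1 + δ) ^ z ≤ Real.exp (ε / 9) := by
        rw [h1, ← hzδ]
        exact Real.exp_le_exp.mpr (mul_le_mul_of_nonneg_left hlog hz0.le)
      have h3 : Real.exp (ε / 9) ≤ 1 / (1 - ε / 9) := by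
        rw [le_div_iff₀ (by linarith)]
        have h4 : 1 - ε / 9 ≤ Real.exp (-(ε / 9)) := by
          have := Real.add_one_le_exp (-(ε / 9)); linarith
        calc Real.exp (ε / 9) * (1 - ε / 9)
            ≤ Real.exp (ε / 9) * Real.exp (-(ε / 9)) := by
              exact mul_le_mul_of_nonneg_left h4 (Real.exp_pos _).le
          _ = 1 := by rw [← Real.exp_add]; simp
      have h5 : 1 / (1 - ε / 9) ≤ 1 + ε / 6 := by
        rw [div_le_iff₀ (by linarith)]
        nlinarith
      linarith
    calc dist x u ^ z ≤ (1 + δ) ^ z * dist x c ^ z := hrle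
      _ ≤ (1 + ε / 6) * dist x c ^ z :=
          mul_le_mul_of_nonneg_right hb (by positivity)
end

section
/- Let P ⊆ X be a finite set, c ∈ X, z ≥ 1, 0 < ε < 1, and r = (cost_z(P,c)/|P|)^(1/z). Suppose s ∈ X satisfies d(s,c) > 5r/ε. Then cost_z(P, s) ≥ (2^(z+1)/ε) · cost_z(P, c), where cost_z(Q, u) = ∑_{q∈Q} d(q,u)^z. -/
/-- Power-mean style inequality: `(a+b)^z ≤ 2^(z-1) * (a^z + b^z)` for `z ≥ 1`. -/
lemma rpow_add_le_two_rpow_mul {a b z : ℝ} (ha : 0 ≤ a) (hb : 0 ≤ b) (hz : 1 ≤ z) :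
    (a + b) ^ z ≤ 2 ^ (z - 1) * (a ^ z + b ^ z) := by
  have h := (convexOn_rpow hz).2 (Set.mem_Ici.2 ha) (Set.mem_Ici.2 hb)
    (by norm_num : (0:ℝ) ≤ 1/2) (by norm_num : (0:ℝ) ≤ 1/2) (by norm_num)
  simp only [smul_eq_mul] at h
  have h2 : (a + b) ^ z = 2 ^ z * ((1/2) * a + (1/2) * b) ^ z := by
    rw [← Real.mul_rpow (by norm_num) (by positivity)]
    ring_nf
  have h3 : (2:ℝ) ^ (z - 1) = 2 ^ z / 2 := by
    rw [Real.rpow_sub (by norm_num), Real.rpow_one]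
  rw [h2, h3]
  have h2z : (0:ℝ) ≤ 2 ^ z := Real.rpow_nonneg (by norm_num) z
  calc 2 ^ z * ((1/2) * a + (1/2) * b) ^ z
      ≤ 2 ^ z * ((1/2) * a ^ z + (1/2) * b ^ z) :=
        mul_le_mul_of_nonneg_left h h2z
    _ = 2 ^ z / 2 * (a ^ z + b ^ z) := by ring

theorem far_center_cost_lower_bound
    {X : Type*} [MetricSpace X] (c s : X) (z ε : ℝ)
    (hz : 1 ≤ z) (hε0 : 0 < ε) (hε1 : ε < 1)
    (P : Finset X) (hP : P.Nonempty) (r : ℝ)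
    (hr : r = ((∑ p ∈ P, dist p c ^ z) / P.card) ^ (1 / z))
    (hs : 5 * r / ε < dist s c) :
    (2 ^ (z + 1) / ε) * ∑ p ∈ P, dist p c ^ z ≤ ∑ p ∈ P, dist p s ^ z := by
  have hz0 : (0:ℝ) < z := lt_of_lt_of_le one_pos hz
  set C : ℝ := ∑ p ∈ P, dist p c ^ z with hCdef
  set S : ℝ := ∑ p ∈ P, dist p s ^ z with hSdef
  set n : ℝ := (P.card : ℝ) with hndef
  have hn : 0 < n := by rw [hndef]; exact_mod_cast Finset.card_pos.2 hP
  have hC0 : 0 ≤ C :=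
    Finset.sum_nonneg fun p _ => Real.rpow_nonneg dist_nonneg z
  have hS0 : 0 ≤ S :=
    Finset.sum_nonneg fun p _ => Real.rpow_nonneg dist_nonneg z
  -- r ≥ 0 and C = n * r^z
  have hr0 : 0 ≤ r := by
    rw [hr]; exact Real.rpow_nonneg (div_nonneg hC0 hn.le) _
  have hrz : r ^ z = C / n := by
    rw [hr, ← Real.rpow_mul (div_nonneg hC0 hn.le), one_div_mul_cancel hz0.ne',
      Real.rpow_one]
  have hCnR : C = n * r ^ z := by
    rw [hrz]; field_simp
  set D : ℝ := dist s c with hDdef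
  -- Pointwise: D^z ≤ 2^(z-1) * ((dist p s)^z + (dist p c)^z)
  have hpt : ∀ p ∈ P, D ^ z ≤ 2 ^ (z - 1) * (dist p s ^ z + dist p c ^ z) := by
    intro p _
    have htri : D ≤ dist p s + dist p c := by
      rw [hDdef, dist_comm p s]
      exact dist_triangle s p c
    calc D ^ z ≤ (dist p s + dist p c) ^ z :=
          Real.rpow_le_rpow dist_nonneg htri hz0.le
      _ ≤ 2 ^ (z - 1) * (dist p s ^ z + dist p c ^ z) :=
          rpow_add_le_two_rpow_mul dist_nonneg dist_nonneg hz
  have hsum : n * D ^ z ≤ 2 ^ (z - 1) * (S + C) := by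
    calc n * D ^ z = ∑ _p ∈ P, D ^ z := by
          rw [Finset.sum_const, nsmul_eq_mul, hndef]
      _ ≤ ∑ p ∈ P, 2 ^ (z - 1) * (dist p s ^ z + dist p c ^ z) :=
          Finset.sum_le_sum hpt
      _ = 2 ^ (z - 1) * (S + C) := by
          rw [← Finset.mul_sum, Finset.sum_add_distrib]
  -- D^z ≥ 5^z * r^z / ε^z
  have hDz : 5 ^ z * r ^ z / ε ^ z ≤ D ^ z := by
    have h1 : (5 * r / ε) ^ z ≤ D ^ z :=
      Real.rpow_le_rpow (by positivity) hs.le hz0.le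
    calc 5 ^ z * r ^ z / ε ^ z = (5 * r / ε) ^ z := by
          rw [Real.div_rpow (by positivity) hε0.le,
            Real.mul_rpow (by norm_num) hr0]
      _ ≤ D ^ z := h1
  -- scalar facts
  have hεz1 : ε ^ z ≤ 1 := Real.rpow_le_one hε0.le hε1.le hz0.le
  have hεz1' : ε ^ (z - 1) ≤ 1 :=
    Real.rpow_le_one hε0.le hε1.le (by linarith)
  have hεsub : ε ^ z / ε = ε ^ (z - 1) := by
    rw [Real.rpow_sub hε0, Real.rpow_one]
  have h2z1 : (0:ℝ) < 2 ^ (z + 1) := Real.rpow_pos_of_pos (by norm_num) _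
  have h2zm : (0:ℝ) < 2 ^ (z - 1) := Real.rpow_pos_of_pos (by norm_num) _
  have hεzpos : (0:ℝ) < ε ^ z := Real.rpow_pos_of_pos hε0 _
  -- 4^z + 2^(z-1) ≤ 5^z
  have h4z : (4:ℝ) ^ z + 2 ^ (z - 1) ≤ 5 ^ z := by
    have h54 : (5:ℝ)/4 ≤ (5/4) ^ z := by
      calc (5:ℝ)/4 = (5/4) ^ (1:ℝ) := (Real.rpow_one _).symm
        _ ≤ (5/4) ^ z := Real.rpow_le_rpow_of_exponent_le (by norm_num) hz
    have h5eq : (5:ℝ) ^ z = (5/4) ^ z * 4 ^ z := by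
      rw [← Real.mul_rpow (by norm_num) (by norm_num)]
      norm_num
    have h4pos : (0:ℝ) < 4 ^ z := Real.rpow_pos_of_pos (by norm_num) _
    have h41 : (4:ℝ) ^ (z - 1) = 4 ^ z / 4 := by
      rw [Real.rpow_sub (by norm_num), Real.rpow_one]
    have h24 : (2:ℝ) ^ (z - 1) ≤ 4 ^ (z - 1) :=
      Real.rpow_le_rpow (by norm_num) (by norm_num) (by linarith)
    have hmul : (5:ℝ)/4 * 4 ^ z ≤ (5/4) ^ z * 4 ^ z :=
      mul_le_mul_of_nonneg_right h54 h4pos.le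
    rw [h41] at h24
    linarith [h5eq ▸ hmul]
  -- 2^(z+1) * 2^(z-1) = 4^z
  have e1 : (2:ℝ) ^ (z + 1) * 2 ^ (z - 1) = 4 ^ z := by
    rw [← Real.rpow_add (by norm_num : (0:ℝ) < 2)]
    have h4eq : (4:ℝ) ^ z = 2 ^ z * 2 ^ z := by
      rw [← Real.mul_rpow (by norm_num) (by norm_num)]; norm_num
    rw [h4eq, ← Real.rpow_add (by norm_num : (0:ℝ) < 2)]
    ring_nf
  -- key scalar inequality
  have hscal : (2 ^ (z + 1) / ε + 1) * ε ^ z * 2 ^ (z - 1) ≤ 5 ^ z := by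
    have e2 : (2 ^ (z + 1) / ε + 1) * ε ^ z
        = 2 ^ (z + 1) * ε ^ (z - 1) + ε ^ z := by
      rw [← hεsub]; field_simp
    have e3 : (2 ^ (z + 1) / ε + 1) * ε ^ z ≤ 2 ^ (z + 1) + 1 := by
      rw [e2]
      nlinarith [h2z1.le]
    calc (2 ^ (z + 1) / ε + 1) * ε ^ z * 2 ^ (z - 1)
        ≤ (2 ^ (z + 1) + 1) * 2 ^ (z - 1) :=
          mul_le_mul_of_nonneg_right e3 h2zm.le
      _ = 4 ^ z + 2 ^ (z - 1) := by rw [add_mul, one_mul, e1]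
      _ ≤ 5 ^ z := h4z
  -- combine everything
  have step1 : ((2 ^ (z + 1) / ε + 1) * C) * (ε ^ z * 2 ^ (z - 1)) ≤ 5 ^ z * C := by
    calc ((2 ^ (z + 1) / ε + 1) * C) * (ε ^ z * 2 ^ (z - 1))
        = ((2 ^ (z + 1) / ε + 1) * ε ^ z * 2 ^ (z - 1)) * C := by ring
      _ ≤ 5 ^ z * C := mul_le_mul_of_nonneg_right hscal hC0
  have step2 : 5 ^ z * C ≤ (S + C) * (ε ^ z * 2 ^ (z - 1)) := by
    calc 5 ^ z * C = n * (5 ^ z * r ^ z / ε ^ z) * ε ^ z := by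
          rw [hCnR]; field_simp
      _ ≤ n * D ^ z * ε ^ z :=
          mul_le_mul_of_nonneg_right
            (mul_le_mul_of_nonneg_left hDz hn.le) hεzpos.le
      _ ≤ 2 ^ (z - 1) * (S + C) * ε ^ z :=
          mul_le_mul_of_nonneg_right hsum hεzpos.le
      _ = (S + C) * (ε ^ z * 2 ^ (z - 1)) := by ring
  have h4 : (2 ^ (z + 1) / ε + 1) * C ≤ S + C :=
    le_of_mul_le_mul_right (step1.trans step2) (by positivity)
  nlinarith [h4]
end

section
/- Let P_far ⊆ X be a finite set of points, c ∈ X, with min_{x∈P_far} d(x,c) > (24z/ε)·d(s,c) for some point s ∈ X, z ≥ 1, and 0 < ε < 1. Then |cost_z(P_far, s) − cost_z(P_far, c)| ≤ (ε/8)·cost_z(P_far, s) + (ε/8)·∑_{x∈P_far}(ε·d(x,c)/(24z))^z·(24z/ε)^z ≤ (ε/8)·cost_z(P_far,s) + (ε/8)·cost_z(P_far,c). More precisely: |cost_z(P_far,s) − cost_z(P_far,c)| ≤ (ε/8)·cost_z(P_far,s) + (24z/ε)^(z−1)·|P_far|·d(s,c)^z, and (24z/ε)^(z−1)·|P_far|·d(s,c)^z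 ≤ (ε/8)·cost_z(P_far,c) under the stated distance hypothesis (using (24z/ε)^{z-1}·(ε/(24z))^z = ε/(24z) ≤ ε/8). -/
open Real

lemma exp_half_le {t : ℝ} (ht0 : 0 < t) (ht1 : t < 1) : Real.exp (t / 2) ≤ 1 + t := by
  have h2 : 0 < 1 - t/2 := by linarith
  have hA : 1 - t/2 ≤ Real.exp (-(t/2)) := by linarith [Real.add_one_le_exp (-(t/2))]
  have hB : Real.exp (t/2) * (1 - t/2) ≤ 1 := by
    calc Real.exp (t/2) * (1 - t/2) ≤ Real.exp (t/2) * Real.exp (-(t/2)) :=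
          mul_le_mul_of_nonneg_left hA (Real.exp_pos _).le
      _ = 1 := by rw [← Real.exp_add]; norm_num
  nlinarith [hB, Real.exp_pos (t/2), sq_nonneg t]

lemma lam_bound {t z : ℝ} (ht0 : 0 < t) (ht1 : t < 1) (hz : 1 ≤ z) :
    (1 - t / (3 * z)) ^ (1 - z) ≤ 1 + t := by
  have hz0 : (0:ℝ) < z := lt_of_lt_of_le one_pos hz
  have hμ0 : 0 < t / (3 * z) := by positivity
  have hμ3 : t / (3 * z) ≤ 1 / 3 := by
    rw [div_le_div_iff₀ (by positivity) (by norm_num)]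
    nlinarith
  set l : ℝ := 1 - t / (3 * z) with hl
  have hl0 : 0 < l := by rw [hl]; linarith
  have hl23 : 2/3 ≤ l := by rw [hl]; linarith
  have hlog : -(t / (2 * z)) ≤ Real.log l := by
    have h1 : Real.log l⁻¹ ≤ l⁻¹ - 1 := Real.log_le_sub_one_of_pos (by positivity)
    have h2 : l⁻¹ - 1 = (1 - l) / l := by field_simp
    have h2' : 1 - l = t / (3 * z) := by rw [hl]; ring
    have h3 : (t / (3 * z)) / l ≤ t / (2 * z) := by
      have h4 : (t / (3 * z)) / l ≤ (t / (3 * z)) / (2/3) := by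
        gcongr
      have h5 : (t / (3 * z)) / (2/3) = t / (2 * z) := by field_simp
      linarith
    rw [Real.log_inv] at h1
    rw [h2', ] at h2
    linarith
  have key : Real.exp (-(t/2)) ≤ l ^ (z - 1) := by
    rw [Real.rpow_def_of_pos hl0]
    apply Real.exp_le_exp.2
    have h4 : (z - 1) * (-(t / (2 * z))) ≤ (z - 1) * Real.log l :=
      mul_le_mul_of_nonneg_left hlog (by linarith)
    have h5 : (z - 1) * (t / (2 * z)) ≤ t / 2 := by
      rw [mul_div_assoc', div_le_div_iff₀ (by positivity) two_pos]
      nlinarith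
    have e1 : (z - 1) * (-(t / (2 * z))) = -((z - 1) * (t / (2 * z))) := by ring
    have e2 : Real.log l * (z - 1) = (z - 1) * Real.log l := by ring
    linarith [h4, h5, e1 ▸ h4]
  have h6 : (1 + t)⁻¹ ≤ l ^ (z - 1) := by
    refine le_trans ?_ key
    rw [Real.exp_neg]
    exact inv_anti₀ (Real.exp_pos _) (exp_half_le ht0 ht1)
  calc l ^ (1 - z) = (l ^ (z - 1))⁻¹ := by
        rw [show (1:ℝ) - z = -(z-1) by ring, Real.rpow_neg hl0.le]
    _ ≤ ((1 + t)⁻¹)⁻¹ := inv_anti₀ (by positivity) h6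
    _ = 1 + t := inv_inv _

lemma key_ineq {a δ t z : ℝ} (ha : 0 ≤ a) (hδ : 0 ≤ δ) (ht0 : 0 < t)
    (ht1 : t < 1) (hz : 1 ≤ z) :
    (a + δ) ^ z ≤ (1 + t) * a ^ z + (3 * z / t) ^ (z - 1) * δ ^ z := by
  have hz0 : (0:ℝ) < z := lt_of_lt_of_le one_pos hz
  set μ : ℝ := t / (3 * z) with hμ
  have hμ0 : 0 < μ := by positivity
  have hμ3 : μ ≤ 1 / 3 := by
    rw [hμ, div_le_div_iff₀ (by positivity) (by norm_num)]
    nlinarith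
  set l : ℝ := 1 - μ with hl
  have hl0 : 0 < l := by rw [hl]; linarith
  have hconv := (convexOn_rpow hz).2 (Set.mem_Ici.2 (by positivity : (0:ℝ) ≤ a / l))
    (Set.mem_Ici.2 (by positivity : (0:ℝ) ≤ δ / μ)) hl0.le hμ0.le (by rw [hl]; ring)
  simp only [smul_eq_mul] at hconv
  have heq : l * (a / l) + μ * (δ / μ) = a + δ := by field_simp
  rw [heq] at hconv
  refine hconv.trans ?_
  have hll : l / l ^ z ≤ 1 + t := by
    calc l / l ^ z = l ^ (1:ℝ) * l ^ (-z) := by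
          rw [Real.rpow_one, Real.rpow_neg hl0.le, div_eq_mul_inv]
      _ = l ^ (1 - z) := by rw [← Real.rpow_add hl0, show (1:ℝ) + -z = 1 - z from by ring]
      _ ≤ 1 + t := lam_bound ht0 ht1 hz
  have e1 : l * (a / l) ^ z ≤ (1 + t) * a ^ z := by
    rw [Real.div_rpow ha hl0.le]
    calc l * (a ^ z / l ^ z) = (l / l ^ z) * a ^ z := by ring
      _ ≤ (1 + t) * a ^ z := mul_le_mul_of_nonneg_right hll (Real.rpow_nonneg ha z)
  have hμμ : μ / μ ^ z = (3 * z / t) ^ (z - 1) := by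
    calc μ / μ ^ z = μ ^ (1:ℝ) * μ ^ (-z) := by
          rw [Real.rpow_one, Real.rpow_neg hμ0.le, div_eq_mul_inv]
      _ = μ ^ (1 - z) := by rw [← Real.rpow_add hμ0, show (1:ℝ) + -z = 1 - z from by ring]
      _ = (μ⁻¹) ^ (z - 1) := by
          rw [Real.inv_rpow hμ0.le, ← Real.rpow_neg hμ0.le]; congr 1; ring
      _ = (3 * z / t) ^ (z - 1) := by
          congr 1
          rw [hμ, inv_div]
  have e2 : μ * (δ / μ) ^ z = (3 * z / t) ^ (z - 1) * δ ^ z := by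
    rw [Real.div_rpow hδ hμ0.le]
    calc μ * (δ ^ z / μ ^ z) = (μ / μ ^ z) * δ ^ z := by ring
      _ = (3 * z / t) ^ (z - 1) * δ ^ z := by rw [hμμ]
  rw [e2]
  linarith

lemma pt_bound {a b δ t z : ℝ} (ha : 0 ≤ a) (hb : 0 ≤ b) (hδ : 0 ≤ δ)
    (hab : b ≤ a + δ) (hba : a ≤ b + δ)
    (ht0 : 0 < t) (ht1 : t < 1) (hz : 1 ≤ z) :
    |a ^ z - b ^ z| ≤ t * a ^ z + (3 * z / t) ^ (z - 1) * δ ^ z := by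
  have hz0 : (0:ℝ) < z := lt_of_lt_of_le one_pos hz
  rw [abs_sub_le_iff]
  constructor
  · rcases le_total b a with h | h
    · have h1 : a ^ z ≤ (1 + t) * b ^ z + (3 * z / t) ^ (z - 1) * δ ^ z :=
        (Real.rpow_le_rpow ha hba hz0.le).trans (key_ineq hb hδ ht0 ht1 hz)
      have h2 : b ^ z ≤ a ^ z := Real.rpow_le_rpow hb h hz0.le
      nlinarith [ht0.le]
    · have h2 : a ^ z ≤ b ^ z := Real.rpow_le_rpow ha h hz0.le
      have h3 : 0 ≤ t * a ^ z + (3 * z / t) ^ (z - 1) * δ ^ z := by positivity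
      linarith
  · have h1 : b ^ z ≤ (1 + t) * a ^ z + (3 * z / t) ^ (z - 1) * δ ^ z :=
      (Real.rpow_le_rpow hb hab hz0.le).trans (key_ineq ha hδ ht0 ht1 hz)
    linarith

theorem far_points_cost_error
    {X : Type*} [MetricSpace X] (c s : X) (z ε : ℝ)
    (hz : 1 ≤ z) (hε0 : 0 < ε) (hε1 : ε < 1)
    (Pfar : Finset X)
    (hfar : ∀ x ∈ Pfar, (24 * z / ε) * dist s c < dist x c) :
    |(∑ x ∈ Pfar, dist x s ^ z) - ∑ x ∈ Pfar, dist x c ^ z|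
        ≤ (ε / 8) * (∑ x ∈ Pfar, dist x s ^ z)
          + (24 * z / ε) ^ (z - 1) * (Pfar.card : ℝ) * dist s c ^ z ∧
    (24 * z / ε) ^ (z - 1) * (Pfar.card : ℝ) * dist s c ^ z
        ≤ (ε / 8) * ∑ x ∈ Pfar, dist x c ^ z := by
  have hz0 : (0:ℝ) < z := lt_of_lt_of_le one_pos hz
  have ht0 : 0 < ε / 8 := by linarith
  have ht1 : ε / 8 < 1 := by linarith
  have hC : (3 * z / (ε / 8)) = 24 * z / ε := by field_simp; ring
  constructor
  · calc |(∑ x ∈ Pfar, dist x s ^ z) - ∑ x ∈ Pfar, dist x c ^ z|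
        = |∑ x ∈ Pfar, (dist x s ^ z - dist x c ^ z)| := by rw [Finset.sum_sub_distrib]
      _ ≤ ∑ x ∈ Pfar, |dist x s ^ z - dist x c ^ z| := Finset.abs_sum_le_sum_abs _ _
      _ ≤ ∑ x ∈ Pfar, ((ε/8) * dist x s ^ z + (24 * z / ε) ^ (z - 1) * dist s c ^ z) := by
          apply Finset.sum_le_sum
          intro x hx
          have hba : dist x s ≤ dist x c + dist s c := by
            have h := dist_triangle x c s; rwa [dist_comm c s] at h
          have h := pt_bound dist_nonneg dist_nonneg dist_nonneg
            (dist_triangle x s c) hba ht0 ht1 hz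
          rw [hC] at h
          linarith [h]
      _ = (ε / 8) * (∑ x ∈ Pfar, dist x s ^ z)
          + (24 * z / ε) ^ (z - 1) * (Pfar.card : ℝ) * dist s c ^ z := by
          rw [Finset.sum_add_distrib, ← Finset.mul_sum, Finset.sum_const, nsmul_eq_mul]
          ring
  · have hper : ∀ x ∈ Pfar, (24 * z / ε) ^ (z - 1) * dist s c ^ z ≤ (ε/8) * dist x c ^ z := by
      intro x hx
      have hr0 : (0:ℝ) < 24 * z / ε := by positivity
      have hd : dist s c ≤ (ε / (24 * z)) * dist x c := by
        have h := (hfar x hx).le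
        rw [div_mul_eq_mul_div, le_div_iff₀ (by positivity)]
        calc dist s c * (24 * z) = (24 * z / ε) * dist s c * ε := by field_simp
          _ ≤ dist x c * ε := by nlinarith [dist_nonneg (x := s) (y := c)]
          _ = ε * dist x c := mul_comm _ _
      have hd2 : dist s c ^ z ≤ (ε / (24 * z)) ^ z * dist x c ^ z := by
        rw [← Real.mul_rpow (by positivity) dist_nonneg]
        exact Real.rpow_le_rpow dist_nonneg hd hz0.le
      have halg : (24 * z / ε) ^ (z - 1) * (ε / (24 * z)) ^ z = ε / (24 * z) := by
        rw [show ε / (24 * z) = (24 * z / ε)⁻¹ from (inv_div (24 * z) ε).symm,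
          Real.inv_rpow hr0.le, ← Real.rpow_neg hr0.le, ← Real.rpow_add hr0,
          show z - 1 + -z = (-1:ℝ) by ring, Real.rpow_neg_one]
      calc (24 * z / ε) ^ (z - 1) * dist s c ^ z
          ≤ (24 * z / ε) ^ (z - 1) * ((ε / (24 * z)) ^ z * dist x c ^ z) :=
            mul_le_mul_of_nonneg_left hd2 (Real.rpow_nonneg hr0.le _)
        _ = (ε / (24 * z)) * dist x c ^ z := by rw [← mul_assoc, halg]
        _ ≤ (ε / 8) * dist x c ^ z := by
            apply mul_le_mul_of_nonneg_right _ (Real.rpow_nonneg dist_nonneg _)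
            rw [div_le_div_iff₀ (by positivity) (by norm_num)]
            nlinarith
    calc (24 * z / ε) ^ (z - 1) * (Pfar.card : ℝ) * dist s c ^ z
        = ∑ _x ∈ Pfar, (24 * z / ε) ^ (z - 1) * dist s c ^ z := by
          rw [Finset.sum_const, nsmul_eq_mul]; ring
      _ ≤ ∑ x ∈ Pfar, (ε/8) * dist x c ^ z := Finset.sum_le_sum hper
      _ = (ε / 8) * ∑ x ∈ Pfar, dist x c ^ z := by rw [Finset.mul_sum]
end

section
/- Let P_close be a finite set of points in a metric space with d(p,c) ≤ (ε/(6z))·r for all p ∈ P_close, where z ≥ 1, 0 < ε < 1, r > 0. Then for every point s, |cost_z(P_close, s) − |P_close|·d(c,s)^z| ≤ (ε/2)·cost_z(P_close, s) + (6z/ε)^(z−1)·|P_close|·(εr/(6z))^z, and the second term equals (ε/(6z))·|P_close|·r^z ≤ (ε/2)·|P_close|·r^z. -/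
open Real Set

lemma aux_convex_split {z : ℝ} (hz : 1 ≤ z) {b d s : ℝ} (hb : 0 ≤ b) (hd : 0 ≤ d) (hs : 0 < s) :
    (b + d) ^ z ≤ (1 + s) ^ (z - 1) * b ^ z + ((1 + s) / s) ^ (z - 1) * d ^ z := by
  have h1s : (0:ℝ) < 1 + s := by linarith
  set lam : ℝ := 1 / (1 + s) with hlamdef
  set mu : ℝ := s / (1 + s) with hmudef
  have hlam : 0 < lam := by positivity
  have hmu : 0 < mu := by positivity
  have hsum : lam + mu = 1 := by rw [hlamdef, hmudef, ← add_div, div_self h1s.ne']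
  have hconv := (convexOn_rpow hz).2 (mem_Ici.2 (show (0:ℝ) ≤ b / lam by positivity))
      (mem_Ici.2 (show (0:ℝ) ≤ d / mu by positivity)) hlam.le hmu.le hsum
  simp only [smul_eq_mul] at hconv
  rw [mul_div_cancel₀ _ hlam.ne', mul_div_cancel₀ _ hmu.ne'] at hconv
  have e1 : lam * (b / lam) ^ z = (1 + s) ^ (z - 1) * b ^ z := by
    rw [div_rpow hb hlam.le]
    rw [show lam * (b ^ z / lam ^ z) = (lam / lam ^ z) * b ^ z by ring]
    congr 1
    rw [show lam / lam ^ z = lam ^ (1:ℝ) / lam ^ z by rw [rpow_one], ← rpow_sub hlam]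
    rw [hlamdef, one_div, inv_rpow h1s.le, ← rpow_neg h1s.le, neg_sub]
  have e2 : mu * (d / mu) ^ z = ((1 + s) / s) ^ (z - 1) * d ^ z := by
    rw [div_rpow hd hmu.le]
    rw [show mu * (d ^ z / mu ^ z) = (mu / mu ^ z) * d ^ z by ring]
    congr 1
    rw [show mu / mu ^ z = mu ^ (1:ℝ) / mu ^ z by rw [rpow_one], ← rpow_sub hmu]
    rw [hmudef, show s / (1 + s) = ((1 + s) / s)⁻¹ by rw [inv_div],
      inv_rpow (by positivity), ← rpow_neg (by positivity), neg_sub]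
  rw [e1, e2] at hconv
  exact hconv

lemma aux_per_point {z ε : ℝ} (hz : 1 ≤ z) (hε0 : 0 < ε) (hε1 : ε < 1)
    {x y δ : ℝ} (hx : 0 ≤ x) (hy : 0 ≤ y) (hδ0 : 0 ≤ δ) (hδ : |x - y| ≤ δ) :
    |x ^ z - y ^ z| ≤ (ε / 2) * x ^ z + (6 * z / ε) ^ (z - 1) * δ ^ z := by
  have hz0 : (0:ℝ) < z := lt_of_lt_of_le one_pos hz
  set t : ℝ := ε / (4 * z) with htdef
  have ht : 0 < t := by positivity
  -- K1 : (1+t)^(z-1) ≤ 1 + ε/2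
  have hK1 : (1 + t) ^ (z - 1) ≤ 1 + ε / 2 := by
    have h1 : (1 + t) ^ (z - 1) ≤ (1 + t) ^ z :=
      rpow_le_rpow_of_exponent_le (by linarith) (by linarith)
    have h2 : (1 + t) ^ z ≤ (exp t) ^ z :=
      rpow_le_rpow (by positivity) (by linarith [add_one_le_exp t]) hz0.le
    have h3 : (exp t) ^ z = exp (ε / 4) := by
      rw [← exp_mul, htdef]; congr 1; field_simp
    have h4 : exp (ε / 4) ≤ 1 + ε / 2 := by
      have h5 : 1 - ε / 4 ≤ exp (-(ε / 4)) := by linarith [add_one_le_exp (-(ε / 4))]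
      rw [exp_neg] at h5
      have h6 : exp (ε / 4) * (1 - ε / 4) ≤ 1 := by
        calc exp (ε / 4) * (1 - ε / 4) ≤ exp (ε / 4) * (exp (ε / 4))⁻¹ := by
              apply mul_le_mul_of_nonneg_left h5 (exp_pos _).le
          _ = 1 := mul_inv_cancel₀ (exp_pos _).ne'
      nlinarith [exp_pos (ε / 4)]
    linarith
  -- K2 : ((1+t)/t)^(z-1) ≤ (6z/ε)^(z-1)
  have hK2 : ((1 + t) / t) ^ (z - 1) ≤ (6 * z / ε) ^ (z - 1) := by
    apply rpow_le_rpow (by positivity) _ (by linarith)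
    rw [htdef, div_le_div_iff₀ (by positivity) hε0]
    have e1 : 6 * z * (ε / (4 * z)) = 3 / 2 * ε := by
      field_simp; ring
    have e2 : ε / (4 * z) ≤ ε / 4 := by gcongr <;> linarith
    rw [e1]
    nlinarith
  -- main
  rcases le_total x y with hxy | hxy
  · -- |x^z - y^z| = y^z - x^z, b = x
    have hxz : x ^ z ≤ y ^ z := rpow_le_rpow hx hxy hz0.le
    rw [abs_sub_comm, abs_of_nonneg (by linarith)]
    have hd : y = x + (y - x) := by ring
    have key := aux_convex_split hz hx (by linarith : (0:ℝ) ≤ y - x) ht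
    rw [← hd] at key
    have hdle : (y - x) ^ z ≤ δ ^ z := by
      apply rpow_le_rpow (by linarith) _ hz0.le
      have := abs_le.mp hδ; linarith
    calc y ^ z - x ^ z ≤ (1 + t) ^ (z-1) * x ^ z + ((1+t)/t) ^ (z-1) * (y - x) ^ z - x ^ z := by
          linarith
      _ ≤ (1 + ε/2) * x ^ z + (6*z/ε) ^ (z-1) * δ ^ z - x ^ z := by
          have b1 : (1 + t) ^ (z-1) * x ^ z ≤ (1 + ε/2) * x ^ z :=
            mul_le_mul_of_nonneg_right hK1 (rpow_nonneg hx z)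
          have b2 : ((1+t)/t) ^ (z-1) * (y - x) ^ z ≤ (6*z/ε) ^ (z-1) * δ ^ z := by
            apply mul_le_mul hK2 hdle (rpow_nonneg (by linarith) z) (rpow_nonneg (by positivity) _)
          linarith
      _ = (ε / 2) * x ^ z + (6 * z / ε) ^ (z - 1) * δ ^ z := by ring
  · -- x ≥ y, b = y
    have hyz : y ^ z ≤ x ^ z := rpow_le_rpow hy hxy hz0.le
    rw [abs_of_nonneg (by linarith)]
    have hd : x = y + (x - y) := by ring
    have key := aux_convex_split hz hy (by linarith : (0:ℝ) ≤ x - y) ht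
    rw [← hd] at key
    have hdle : (x - y) ^ z ≤ δ ^ z := by
      apply rpow_le_rpow (by linarith) _ hz0.le
      have := abs_le.mp hδ; linarith
    have h1t : (1:ℝ) ≤ (1 + t) ^ (z - 1) := one_le_rpow (by linarith) (by linarith)
    calc x ^ z - y ^ z ≤ (1 + t) ^ (z-1) * y ^ z + ((1+t)/t) ^ (z-1) * (x - y) ^ z - y ^ z := by
          linarith
      _ = ((1 + t) ^ (z-1) - 1) * y ^ z + ((1+t)/t) ^ (z-1) * (x - y) ^ z := by ring
      _ ≤ (ε / 2) * x ^ z + (6 * z / ε) ^ (z - 1) * δ ^ z := by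
          have b1 : ((1 + t) ^ (z-1) - 1) * y ^ z ≤ (ε/2) * x ^ z := by
            calc ((1 + t) ^ (z-1) - 1) * y ^ z ≤ (ε/2) * y ^ z := by
                  apply mul_le_mul_of_nonneg_right (by linarith) (rpow_nonneg hy z)
              _ ≤ (ε/2) * x ^ z := by
                  apply mul_le_mul_of_nonneg_left hyz (by positivity)
          have b2 : ((1+t)/t) ^ (z-1) * (x - y) ^ z ≤ (6*z/ε) ^ (z-1) * δ ^ z :=
            mul_le_mul hK2 hdle (rpow_nonneg (by linarith) z) (rpow_nonneg (by positivity) _)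
          linarith

theorem close_points_collapse_error
    {X : Type*} [MetricSpace X] (c s : X) (z ε r : ℝ)
    (hz : 1 ≤ z) (hε0 : 0 < ε) (hε1 : ε < 1) (hr : 0 < r)
    (Pclose : Finset X)
    (hclose : ∀ p ∈ Pclose, dist p c ≤ (ε / (6 * z)) * r) :
    |(∑ p ∈ Pclose, dist p s ^ z) - (Pclose.card : ℝ) * dist c s ^ z|
        ≤ (ε / 2) * (∑ p ∈ Pclose, dist p s ^ z)
          + (6 * z / ε) ^ (z - 1) * (Pclose.card : ℝ) * (ε * r / (6 * z)) ^ z ∧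
    (6 * z / ε) ^ (z - 1) * (ε * r / (6 * z)) ^ z = (ε / (6 * z)) * r ^ z ∧
    (ε / (6 * z)) * (Pclose.card : ℝ) * r ^ z
        ≤ (ε / 2) * (Pclose.card : ℝ) * r ^ z := by
  have hz0 : (0:ℝ) < z := lt_of_lt_of_le one_pos hz
  have hA : (0:ℝ) < 6 * z / ε := by positivity
  refine ⟨?_, ?_, ?_⟩
  · have hper : ∀ p ∈ Pclose, |dist p s ^ z - dist c s ^ z|
        ≤ (ε / 2) * dist p s ^ z + (6 * z / ε) ^ (z - 1) * (ε * r / (6 * z)) ^ z := by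
      intro p hp
      have h1 : |dist p s - dist c s| ≤ ε * r / (6 * z) := by
        calc |dist p s - dist c s| ≤ dist p c := abs_dist_sub_le p c s
          _ ≤ ε / (6 * z) * r := hclose p hp
          _ = ε * r / (6 * z) := by ring
      exact aux_per_point hz hε0 hε1 dist_nonneg dist_nonneg (by positivity) h1
    calc |(∑ p ∈ Pclose, dist p s ^ z) - (Pclose.card : ℝ) * dist c s ^ z|
        = |∑ p ∈ Pclose, (dist p s ^ z - dist c s ^ z)| := by
          rw [Finset.sum_sub_distrib, Finset.sum_const, nsmul_eq_mul]
      _ ≤ ∑ p ∈ Pclose, |dist p s ^ z - dist c s ^ z| := Finset.abs_sum_le_sum_abs _ _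
      _ ≤ ∑ p ∈ Pclose, ((ε / 2) * dist p s ^ z + (6 * z / ε) ^ (z - 1) * (ε * r / (6 * z)) ^ z) :=
          Finset.sum_le_sum hper
      _ = (ε / 2) * (∑ p ∈ Pclose, dist p s ^ z)
          + (6 * z / ε) ^ (z - 1) * (Pclose.card : ℝ) * (ε * r / (6 * z)) ^ z := by
          rw [Finset.sum_add_distrib, ← Finset.mul_sum, Finset.sum_const, nsmul_eq_mul]; ring
  · have e1 : ε * r / (6 * z) = (6 * z / ε)⁻¹ * r := by
      rw [inv_div]; ring
    rw [e1, Real.mul_rpow (by positivity) hr.le, Real.inv_rpow hA.le,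
      ← Real.rpow_neg hA.le, ← mul_assoc, ← Real.rpow_add hA]
    rw [show z - 1 + -z = -1 by ring, Real.rpow_neg_one, inv_div]
  · have h1 : ε / (6 * z) ≤ ε / 2 := by gcongr <;> linarith
    have h2 : (0:ℝ) ≤ (Pclose.card : ℝ) := Nat.cast_nonneg _
    apply mul_le_mul_of_nonneg_right (mul_le_mul_of_nonneg_right h1 h2)
      (Real.rpow_nonneg hr.le z)
end

section
/- Let G, D be finite sets in a metric space, C a finite center set, Γ : C → ℝ≥0, σ : G × C → ℝ≥0 and π : D × C → ℝ≥0 both consistent with Γ (i.e., ∑_{x∈G}σ(x,u) = Γ(u) = ∑_{y∈D}π(y,u) for all u). Suppose all points of G ∪ D are within distance R of a point c. Then for z ≥ 1 and 0 < ε < 1: |∑_{x,u}σ(x,u)d(x,u)^z − ∑_{y,u}π(y,u)d(y,u)^z| ≤ ε·∑_{x,u}σ(x,u)d(x,u)^z + (6z/ε)^(z−1)·(∑_{x,u}σ(x,u)d(x,c)^z + ∑_{y,u}π(y,u)d(y,c)^z). -/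
open Finset

lemma conv2 {z lam mu a b : ℝ} (hz : 1 ≤ z) (hl : 0 < lam) (hm : 0 < mu)
    (hlm : lam + mu = 1) (ha : 0 ≤ a) (hb : 0 ≤ b) :
    (a + b) ^ z ≤ lam ^ (1 - z) * a ^ z + mu ^ (1 - z) * b ^ z := by
  have h := Real.rpow_arith_mean_le_arith_mean_rpow Finset.univ ![lam, mu] ![a / lam, b / mu]
    (by intro i _; fin_cases i <;> simp [hl.le, hm.le])
    (by simp [Fin.sum_univ_succ, hlm])
    (by intro i _; fin_cases i <;> simp [div_nonneg, ha, hb, hl.le, hm.le]) hz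
  simp only [Fin.sum_univ_two, Matrix.cons_val_zero, Matrix.cons_val_one, Matrix.head_cons] at h
  rw [mul_div_cancel₀ _ hl.ne', mul_div_cancel₀ _ hm.ne'] at h
  have e1 : lam * (a / lam) ^ z = lam ^ (1 - z) * a ^ z := by
    rw [Real.div_rpow ha hl.le, Real.rpow_sub hl, Real.rpow_one]
    have : lam ^ z ≠ 0 := (Real.rpow_pos_of_pos hl z).ne'
    field_simp
  have e2 : mu * (b / mu) ^ z = mu ^ (1 - z) * b ^ z := by
    rw [Real.div_rpow hb hm.le, Real.rpow_sub hm, Real.rpow_one]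
    have : mu ^ z ≠ 0 := (Real.rpow_pos_of_pos hm z).ne'
    field_simp
  rwa [e1, e2] at h

lemma key_pow {z ε : ℝ} (hz : 1 ≤ z) (hε0 : 0 < ε) (hε1 : ε < 1) {a b : ℝ}
    (ha : 0 ≤ a) (hb : 0 ≤ b) :
    |a ^ z - b ^ z| ≤ ε * a ^ z + (3 * z / ε) ^ (z - 1) * |a - b| ^ z := by
  have hzpos : (0:ℝ) < z := lt_of_lt_of_le one_pos hz
  set mu : ℝ := ε / (3 * z) with hmu_def
  have hmu : 0 < mu := by positivity
  have hmu3 : mu ≤ ε / 3 := by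
    apply div_le_div_of_nonneg_left hε0.le (by norm_num) ?_
    nlinarith
  have hmu1 : mu < 1 := lt_of_le_of_lt hmu3 (by linarith)
  set lam : ℝ := 1 - mu with hlam_def
  have hl : 0 < lam := by simp only [hlam_def]; linarith
  have hl1 : lam ≤ 1 := by simp only [hlam_def]; linarith
  have hKpos : (0:ℝ) < (3 * z / ε) ^ (z - 1) := Real.rpow_pos_of_pos (by positivity) _
  -- lam ^ (z-1) ≥ 1 - ε/3
  have hB : 1 - ε / 3 ≤ lam ^ (z - 1) := by
    rcases le_total z 2 with h2 | h2
    · have := Real.rpow_le_rpow_of_exponent_ge hl hl1 (by linarith : z - 1 ≤ 1)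
      rw [Real.rpow_one] at this
      calc 1 - ε / 3 ≤ lam := by simp only [hlam_def]; linarith
        _ ≤ lam ^ (z - 1) := this
    · have hber := one_add_mul_self_le_rpow_one_add (s := -mu) (by linarith) (p := z - 1)
        (by linarith)
      have h1 : (1 : ℝ) + -mu = lam := by simp only [hlam_def]; ring
      rw [h1] at hber
      have hmuz : (z - 1) * mu ≤ ε / 3 := by
        have hle : (z - 1) / z ≤ 1 := by rw [div_le_one hzpos]; linarith
        have h := mul_le_mul_of_nonneg_right hle (by positivity : (0:ℝ) ≤ ε / 3)
        calc (z - 1) * mu = (z - 1) / z * (ε / 3) := by rw [hmu_def]; ring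
          _ ≤ 1 * (ε / 3) := h
          _ = ε / 3 := one_mul _
      calc 1 - ε / 3 ≤ 1 + (z - 1) * -mu := by nlinarith
        _ ≤ lam ^ (z - 1) := hber
  -- lam ^ (1-z) ≤ 1 + ε
  have hlam_bound : lam ^ (1 - z) ≤ 1 + ε := by
    have hpos : 0 < lam ^ (z - 1) := Real.rpow_pos_of_pos hl _
    rw [show (1:ℝ) - z = -(z - 1) by ring, Real.rpow_neg hl.le, ← one_div, div_le_iff₀ hpos]
    nlinarith
  -- mu ^ (1-z) = (3z/ε)^(z-1)
  have hmu_eq : mu ^ (1 - z) = (3 * z / ε) ^ (z - 1) := by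
    have h3 : mu = (3 * z / ε)⁻¹ := by rw [hmu_def, inv_div]
    rw [h3, Real.inv_rpow (by positivity), ← Real.rpow_neg (by positivity), neg_sub]
  -- helper: b ≤ a
  have helper : ∀ a b : ℝ, 0 ≤ b → b ≤ a →
      a ^ z - b ^ z ≤ ε * b ^ z + (3 * z / ε) ^ (z - 1) * (a - b) ^ z := by
    intro a b hb hba
    have h := conv2 (z := z) (lam := lam) (mu := mu) hz hl hmu (by simp [hlam_def])
      hb (by linarith : (0:ℝ) ≤ a - b)
    rw [show b + (a - b) = a by ring] at h
    have hbz : 0 ≤ b ^ z := Real.rpow_nonneg hb z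
    have := mul_le_mul_of_nonneg_right hlam_bound hbz
    rw [hmu_eq] at h
    nlinarith
  rcases le_total b a with hba | hab
  · have h := helper a b hb hba
    have habs : |a - b| = a - b := abs_of_nonneg (by linarith)
    have hmono : b ^ z ≤ a ^ z := Real.rpow_le_rpow hb hba hzpos.le
    rw [abs_of_nonneg (by linarith), habs]
    nlinarith
  · have h := helper b a ha hab
    have habs : |a - b| = b - a := by rw [abs_of_nonpos (by linarith : a - b ≤ 0)]; ring
    have hmono : a ^ z ≤ b ^ z := Real.rpow_le_rpow ha hab hzpos.le
    rw [abs_of_nonpos (by linarith), habs]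
    have haz : 0 ≤ a ^ z := Real.rpow_nonneg ha z
    nlinarith

lemma coupling {α β : Type*} (s : Finset α) (t : Finset β) (p F f : α → ℝ) (q H g : β → ℝ)
    (hp : ∀ x ∈ s, 0 ≤ p x) (hq : ∀ y ∈ t, 0 ≤ q y)
    (hpq : ∑ x ∈ s, p x = ∑ y ∈ t, q y)
    (hbd : ∀ x ∈ s, ∀ y ∈ t, |f x - g y| ≤ F x + H y) :
    |∑ x ∈ s, p x * f x - ∑ y ∈ t, q y * g y|
      ≤ ∑ x ∈ s, p x * F x + ∑ y ∈ t, q y * H y := by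
  set γ : ℝ := ∑ x ∈ s, p x with hγdef
  rcases eq_or_lt_of_le (Finset.sum_nonneg hp) with hγ0 | hγpos
  · -- γ = 0 : all weights vanish
    have hps : ∀ x ∈ s, p x = 0 := (Finset.sum_eq_zero_iff_of_nonneg hp).mp hγ0.symm
    have hqs : ∀ y ∈ t, q y = 0 := by
      refine (Finset.sum_eq_zero_iff_of_nonneg hq).mp ?_
      rw [← hpq]; exact hγ0.symm
    rw [Finset.sum_eq_zero (fun x hx => by rw [hps x hx, zero_mul] : ∀ x ∈ s, p x * f x = 0),
        Finset.sum_eq_zero (fun y hy => by rw [hqs y hy, zero_mul] : ∀ y ∈ t, q y * g y = 0),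
        Finset.sum_eq_zero (fun x hx => by rw [hps x hx, zero_mul] : ∀ x ∈ s, p x * F x = 0),
        Finset.sum_eq_zero (fun y hy => by rw [hqs y hy, zero_mul] : ∀ y ∈ t, q y * H y = 0)]
    simp
  · have hγne : γ ≠ 0 := hγpos.ne'
    have keyf : ∀ f : α → ℝ, ∑ x ∈ s, p x * f x = ∑ x ∈ s, ∑ y ∈ t, p x * q y / γ * f x := by
      intro f
      refine Finset.sum_congr rfl fun x hx => ?_
      have h1 : ∑ y ∈ t, p x * q y / γ * f x = p x * f x / γ * ∑ y ∈ t, q y := by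
        rw [Finset.mul_sum]
        exact Finset.sum_congr rfl fun y _ => by ring
      rw [h1, ← hpq]
      field_simp
    have keyg : ∀ g : β → ℝ, ∑ y ∈ t, q y * g y = ∑ x ∈ s, ∑ y ∈ t, p x * q y / γ * g y := by
      intro g
      rw [Finset.sum_comm]
      refine Finset.sum_congr rfl fun y hy => ?_
      have h1 : ∑ x ∈ s, p x * q y / γ * g y = q y * g y / γ * ∑ x ∈ s, p x := by
        rw [Finset.mul_sum]
        exact Finset.sum_congr rfl fun x _ => by ring
      rw [h1]
      field_simp
      rw [hγdef]
    have hw : ∀ x ∈ s, ∀ y ∈ t, 0 ≤ p x * q y / γ := fun x hx y hy =>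
      div_nonneg (mul_nonneg (hp x hx) (hq y hy)) hγpos.le
    calc |∑ x ∈ s, p x * f x - ∑ y ∈ t, q y * g y|
        = |∑ x ∈ s, ∑ y ∈ t, p x * q y / γ * (f x - g y)| := by
          rw [keyf f, keyg g, ← Finset.sum_sub_distrib]
          congr 1
          refine Finset.sum_congr rfl fun x _ => ?_
          rw [← Finset.sum_sub_distrib]
          exact Finset.sum_congr rfl fun y _ => by ring
      _ ≤ ∑ x ∈ s, ∑ y ∈ t, p x * q y / γ * |f x - g y| := by
          refine (Finset.abs_sum_le_sum_abs _ _).trans (Finset.sum_le_sum fun x hx => ?_)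
          refine (Finset.abs_sum_le_sum_abs _ _).trans (Finset.sum_le_sum fun y hy => ?_)
          rw [abs_mul, abs_of_nonneg (hw x hx y hy)]
      _ ≤ ∑ x ∈ s, ∑ y ∈ t, p x * q y / γ * (F x + H y) := by
          refine Finset.sum_le_sum fun x hx => Finset.sum_le_sum fun y hy => ?_
          exact mul_le_mul_of_nonneg_left (hbd x hx y hy) (hw x hx y hy)
      _ = (∑ x ∈ s, ∑ y ∈ t, p x * q y / γ * F x)
            + ∑ x ∈ s, ∑ y ∈ t, p x * q y / γ * H y := by
          rw [← Finset.sum_add_distrib]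
          refine Finset.sum_congr rfl fun x _ => ?_
          rw [← Finset.sum_add_distrib]
          exact Finset.sum_congr rfl fun y _ => by ring
      _ = ∑ x ∈ s, p x * F x + ∑ y ∈ t, q y * H y := by rw [← keyf F, ← keyg H]

theorem matched_assignments_cost_error
    {X : Type*} [MetricSpace X] [DecidableEq X] (c : X) (z ε R : ℝ)
    (hz : 1 ≤ z) (hε0 : 0 < ε) (hε1 : ε < 1) (hR : 0 < R)
    (G D C : Finset X) (Γ : X → ℝ) (σ π : X → X → ℝ)
    (hσ : ∀ x ∈ G, ∀ u ∈ C, 0 ≤ σ x u)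
    (hπ : ∀ y ∈ D, ∀ u ∈ C, 0 ≤ π y u)
    (hσΓ : ∀ u ∈ C, ∑ x ∈ G, σ x u = Γ u)
    (hπΓ : ∀ u ∈ C, ∑ y ∈ D, π y u = Γ u)
    (hGR : ∀ x ∈ G ∪ D, dist x c ≤ R) :
    |(∑ x ∈ G, ∑ u ∈ C, σ x u * dist x u ^ z)
        - ∑ y ∈ D, ∑ u ∈ C, π y u * dist y u ^ z|
      ≤ ε * (∑ x ∈ G, ∑ u ∈ C, σ x u * dist x u ^ z)
        + (6 * z / ε) ^ (z - 1) *
          ((∑ x ∈ G, ∑ u ∈ C, σ x u * dist x c ^ z)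
            + ∑ y ∈ D, ∑ u ∈ C, π y u * dist y c ^ z) := by
  have hzpos : (0:ℝ) < z := lt_of_lt_of_le one_pos hz
  set K : ℝ := (6 * z / ε) ^ (z - 1) with hKdef
  have hK3 : (0:ℝ) ≤ (3 * z / ε) ^ (z - 1) := (Real.rpow_pos_of_pos (by positivity) _).le
  -- pointwise bound
  have hpt : ∀ u x y : X, |dist x u ^ z - dist y u ^ z|
      ≤ (ε * dist x u ^ z + K * dist x c ^ z) + K * dist y c ^ z := by
    intro u x y
    have h1 := key_pow (a := dist x u) (b := dist y u) hz hε0 hε1 dist_nonneg dist_nonneg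
    have h2 : |dist x u - dist y u| ^ z ≤ dist x y ^ z :=
      Real.rpow_le_rpow (abs_nonneg _) (abs_dist_sub_le x y u) hzpos.le
    have h3 : dist x y ^ z ≤ (dist x c + dist y c) ^ z :=
      Real.rpow_le_rpow dist_nonneg
        ((dist_triangle x c y).trans_eq (by rw [dist_comm c y])) hzpos.le
    have h4 : (dist x c + dist y c) ^ z
        ≤ (2:ℝ) ^ (z - 1) * dist x c ^ z + (2:ℝ) ^ (z - 1) * dist y c ^ z := by
      have hc := conv2 (z := z) (lam := 1/2) (mu := 1/2) hz (by norm_num) (by norm_num)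
        (by norm_num) (dist_nonneg (x := x) (y := c)) (dist_nonneg (x := y) (y := c))
      have he : ((1:ℝ)/2) ^ (1 - z) = (2:ℝ) ^ (z - 1) := by
        rw [show (1:ℝ)/2 = (2:ℝ)⁻¹ by norm_num, Real.inv_rpow (by norm_num),
          ← Real.rpow_neg (by norm_num), neg_sub]
      rwa [he] at hc
    have h5 : (3 * z / ε) ^ (z - 1) * (2:ℝ) ^ (z - 1) = K := by
      rw [hKdef, ← Real.mul_rpow (by positivity) (by norm_num)]
      ring_nf
    calc |dist x u ^ z - dist y u ^ z|
        ≤ ε * dist x u ^ z + (3 * z / ε) ^ (z - 1) * |dist x u - dist y u| ^ z := h1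
      _ ≤ ε * dist x u ^ z + (3 * z / ε) ^ (z - 1)
            * ((2:ℝ) ^ (z - 1) * dist x c ^ z + (2:ℝ) ^ (z - 1) * dist y c ^ z) := by
          have := h2.trans (h3.trans h4)
          nlinarith [mul_le_mul_of_nonneg_left this hK3]
      _ = (ε * dist x u ^ z + K * dist x c ^ z) + K * dist y c ^ z := by
          rw [← h5]; ring
  -- per-center bound via coupling
  have hper : ∀ u ∈ C,
      |(∑ x ∈ G, σ x u * dist x u ^ z) - ∑ y ∈ D, π y u * dist y u ^ z|
        ≤ (ε * ∑ x ∈ G, σ x u * dist x u ^ z + K * ∑ x ∈ G, σ x u * dist x c ^ z)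
          + K * ∑ y ∈ D, π y u * dist y c ^ z := by
    intro u hu
    have h := coupling G D (fun x => σ x u) (fun x => ε * dist x u ^ z + K * dist x c ^ z)
      (fun x => dist x u ^ z) (fun y => π y u) (fun y => K * dist y c ^ z)
      (fun y => dist y u ^ z)
      (fun x hx => hσ x hx u hu) (fun y hy => hπ y hy u hu)
      (by rw [hσΓ u hu, hπΓ u hu]) (fun x _ y _ => hpt u x y)
    refine h.trans_eq ?_
    rw [Finset.mul_sum, Finset.mul_sum, Finset.mul_sum, ← Finset.sum_add_distrib]
    congr 1
    · exact Finset.sum_congr rfl fun x _ => by ring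
    · exact Finset.sum_congr rfl fun y _ => by ring
  -- assemble
  rw [Finset.sum_comm (s := G) (t := C), Finset.sum_comm (s := D) (t := C),
    Finset.sum_comm (s := G) (t := C) (f := fun x u => σ x u * dist x c ^ z),
    Finset.sum_comm (s := D) (t := C) (f := fun y u => π y u * dist y c ^ z),
    ← Finset.sum_sub_distrib]
  calc |∑ u ∈ C, ((∑ x ∈ G, σ x u * dist x u ^ z) - ∑ y ∈ D, π y u * dist y u ^ z)|
      ≤ ∑ u ∈ C, |(∑ x ∈ G, σ x u * dist x u ^ z) - ∑ y ∈ D, π y u * dist y u ^ z| :=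
        Finset.abs_sum_le_sum_abs _ _
    _ ≤ ∑ u ∈ C, ((ε * ∑ x ∈ G, σ x u * dist x u ^ z
            + K * ∑ x ∈ G, σ x u * dist x c ^ z)
          + K * ∑ y ∈ D, π y u * dist y c ^ z) := Finset.sum_le_sum hper
    _ = ε * (∑ u ∈ C, ∑ x ∈ G, σ x u * dist x u ^ z)
        + K * ((∑ u ∈ C, ∑ x ∈ G, σ x u * dist x c ^ z)
            + ∑ u ∈ C, ∑ y ∈ D, π y u * dist y c ^ z) := by
        rw [mul_add, Finset.mul_sum, Finset.mul_sum, Finset.mul_sum,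
          ← Finset.sum_add_distrib, ← Finset.sum_add_distrib]
        exact Finset.sum_congr rfl fun u _ => by ring
end

section
/- Let B = R₁ ∪ R₂ ∪ ... ∪ R_m be a finite sequence of disjoint finite weighted point sets ('rings') each with cost_z(R_i, c) ≤ E for a threshold E > 0, and total cost ∑_i cost_z(R_i, c) = T. Then the rings can be partitioned into at most 3·(⌈T/E⌉ + 1) consecutive groups, each group being a union of consecutive rings, such that every group G satisfies cost_z(G, c) ≤ E. -/
open Classical in
noncomputable def rgNext (s : ℕ → ℝ) (E : ℝ) (m t : ℕ) : ℕ :=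
  max t (Nat.findGreatest (fun i => t < i ∧ s i - s t ≤ E) m)

noncomputable def rgB (s : ℕ → ℝ) (E : ℝ) (m : ℕ) : ℕ → ℕ
  | 0 => 0
  | j + 1 => rgNext s E m (rgB s E m j)

theorem ring_grouping
    {X : Type*} [MetricSpace X] [DecidableEq X] (c : X) (z E T : ℝ)
    (hz : 1 ≤ z) (hE : 0 < E)
    (m : ℕ) (R : Fin m → Finset X)
    (hdisj : ∀ i j, i ≠ j → Disjoint (R i) (R j))
    (hcost : ∀ i, ∑ p ∈ R i, dist p c ^ z ≤ E)
    (hT : ∑ i, ∑ p ∈ R i, dist p c ^ z = T) :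
    ∃ g : ℕ, g ≤ 3 * (⌈T / E⌉₊ + 1) ∧
      ∃ f : Fin m → Fin g, Monotone f ∧
        ∀ j : Fin g,
          ∑ p ∈ (Finset.univ.filter fun i => f i = j).biUnion R,
            dist p c ^ z ≤ E := by
  classical
  set cost : Fin m → ℝ := fun i => ∑ p ∈ R i, dist p c ^ z with hcostdef
  have hcost0 : ∀ i, 0 ≤ cost i := fun i =>
    Finset.sum_nonneg fun p _ => Real.rpow_nonneg dist_nonneg z
  set w : ℕ → ℝ := fun n => if h : n < m then cost ⟨n, h⟩ else 0 with hwdef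
  have hw0 : ∀ n, 0 ≤ w n := by
    intro n
    simp only [hwdef]
    split
    · exact hcost0 _
    · exact le_refl 0
  have hwE : ∀ n, w n ≤ E := by
    intro n
    simp only [hwdef]
    split
    · exact hcost _
    · exact le_of_lt hE
  set s : ℕ → ℝ := fun n => ∑ i ∈ Finset.range n, w i with hsdef
  have hs_succ : ∀ n, s (n + 1) = s n + w n := fun n => Finset.sum_range_succ w n
  have hs_mono : Monotone s := by
    intro a b hab
    exact Finset.sum_le_sum_of_subset_of_nonneg (Finset.range_subset_range.2 hab)
      (fun n _ _ => hw0 n)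
  have hsm : s m = T := by
    rw [← hT]
    show ∑ n ∈ Finset.range m, w n = ∑ i, cost i
    rw [Finset.sum_range]
    exact Finset.sum_congr rfl fun i _ => by simp [hwdef, i.isLt]
  set b : ℕ → ℕ := rgB s E m with hbdef
  have hb0 : b 0 = 0 := rfl
  have hbsucc : ∀ j, b (j + 1) = rgNext s E m (b j) := fun j => rfl
  have hnext_le : ∀ t, t ≤ m → rgNext s E m t ≤ m := fun t ht =>
    max_le ht (Nat.findGreatest_le m)
  have hble : ∀ j, b j ≤ m := by
    intro j
    induction j with
    | zero => exact Nat.zero_le m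
    | succ j ih => rw [hbsucc]; exact hnext_le _ ih
  have hnext_self : ∀ t, t ≤ rgNext s E m t := fun t => le_max_left _ _
  have hfg_ge : ∀ t, t < m →
      t + 1 ≤ Nat.findGreatest (fun i => t < i ∧ s i - s t ≤ E) m := by
    intro t ht
    refine Nat.le_findGreatest ht ⟨Nat.lt_succ_self t, ?_⟩
    rw [hs_succ t]
    have := hwE t
    linarith
  have hnext_eq_fg : ∀ t, t < m →
      rgNext s E m t = Nat.findGreatest (fun i => t < i ∧ s i - s t ≤ E) m := by
    intro t ht
    exact max_eq_right (le_trans (Nat.le_succ t) (hfg_ge t ht))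
  have hnext_lt : ∀ t, t < m → t < rgNext s E m t := by
    intro t ht
    rw [hnext_eq_fg t ht]
    exact lt_of_lt_of_le (Nat.lt_succ_self t) (hfg_ge t ht)
  have hnext_cost : ∀ t, t < m → s (rgNext s E m t) - s t ≤ E := by
    intro t ht
    rw [hnext_eq_fg t ht]
    exact (Nat.findGreatest_spec (P := fun i => t < i ∧ s i - s t ≤ E) ht
      ⟨Nat.lt_succ_self t, by rw [hs_succ t]; have := hwE t; linarith⟩).2
  have hnext_max : ∀ t, t < m → rgNext s E m t < m →
      E < s (rgNext s E m t + 1) - s t := by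
    intro t ht hlt
    have hfg : Nat.findGreatest (fun i => t < i ∧ s i - s t ≤ E) m
        < rgNext s E m t + 1 := by
      rw [hnext_eq_fg t ht]
      exact Nat.lt_succ_self _
    have := Nat.findGreatest_is_greatest hfg (by omega)
    simp only [not_and, not_le] at this
    exact this (lt_of_le_of_lt (hnext_self t) (Nat.lt_succ_self _))
  have hb_mono_succ : ∀ j, b j ≤ b (j + 1) := fun j => hnext_self (b j)
  have hbmono : Monotone b := monotone_nat_of_le_succ hb_mono_succ
  have hb_lt : ∀ j, b j < m → b j < b (j + 1) := fun j hj => hnext_lt (b j) hj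
  have hbm : b m = m := by
    have key : ∀ j, min j m ≤ b j := by
      intro j
      induction j with
      | zero => simp
      | succ j ih =>
        show min (j + 1) m ≤ b (j + 1)
        rcases lt_or_ge (b j) m with h | h
        · have := hb_lt j h
          omega
        · have h1 := hble (j + 1)
          have h2 := hb_mono_succ j
          omega
    have h1 := key m
    have h2 := hble m
    omega
  have hkex : ∃ j, b j = m := ⟨m, hbm⟩
  set k : ℕ := Nat.find hkex with hkdef
  have hbk : b k = m := Nat.find_spec hkex
  have hklt : ∀ j, j < k → b j < m := by
    intro j hj
    have := Nat.find_min hkex hj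
    have := hble j
    omega
  have hfspec : ∀ i : Fin m, b (Nat.findGreatest (fun j' => b j' ≤ i.val) k) ≤ i.val := by
    intro i
    exact Nat.findGreatest_spec (P := fun j' => b j' ≤ i.val) (Nat.zero_le k)
      (by simp [hb0])
  -- pairing bound
  have hpair : ∀ j, j + 2 ≤ k → E < s (b (j + 2)) - s (b j) := by
    intro j hj
    have h0 : b j < m := hklt j (by omega)
    have h1 : b (j + 1) < m := hklt (j + 1) (by omega)
    have hmax := hnext_max (b j) h0 (by rw [← hbsucc]; exact h1)
    rw [← hbsucc] at hmax
    have hstep : b (j + 1) + 1 ≤ b (j + 2) := hb_lt (j + 1) h1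
    have := hs_mono hstep
    linarith
  have hchain : ∀ r, 2 * r ≤ k → (r : ℝ) * E ≤ s (b (2 * r)) - s (b 0) := by
    intro r
    induction r with
    | zero => intro _; simp
    | succ r ih =>
      intro hr
      have h2 : 2 * r + 2 ≤ k := by omega
      have ihh := ih (by omega)
      have hp := hpair (2 * r) h2
      have heq : 2 * (r + 1) = 2 * r + 2 := by ring
      rw [heq]
      push_cast
      linarith
  have hs0 : s (b 0) = 0 := by simp [hb0, hsdef]
  -- bound on k
  have hkbound : k ≤ 3 * (⌈T / E⌉₊ + 1) := by
    have h2r : 2 * (k / 2) ≤ k := by omega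
    have hc := hchain (k / 2) h2r
    have hle : s (b (2 * (k / 2))) ≤ T := by
      rw [← hsm]; exact hs_mono (hble _)
    have hrT : ((k / 2 : ℕ) : ℝ) * E ≤ T := by
      rw [hs0] at hc; linarith
    have hdiv : ((k / 2 : ℕ) : ℝ) ≤ T / E := (le_div_iff₀ hE).2 hrT
    have hceil : ((k / 2 : ℕ) : ℝ) ≤ (⌈T / E⌉₊ : ℝ) :=
      le_trans hdiv (Nat.le_ceil _)
    have : k / 2 ≤ ⌈T / E⌉₊ := by exact_mod_cast hceil
    omega
  -- the map f
  have hf_lt : ∀ i : Fin m, Nat.findGreatest (fun j => b j ≤ i.val) k < k := by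
    intro i
    have hle : Nat.findGreatest (fun j => b j ≤ i.val) k ≤ k :=
      Nat.findGreatest_le k
    have hne : Nat.findGreatest (fun j => b j ≤ i.val) k ≠ k := by
      intro h
      have := hfspec i
      rw [h, hbk] at this
      exact absurd this (by omega)
    omega
  refine ⟨k, hkbound, fun i => ⟨Nat.findGreatest (fun j => b j ≤ i.val) k, hf_lt i⟩,
    ?_, ?_⟩
  · intro i i' hii
    simp only [Fin.mk_le_mk]
    apply Nat.le_findGreatest (Nat.findGreatest_le k)
    exact le_trans (hfspec i) hii
  · intro j
    -- characterization of the fiber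
    have hchar : ∀ i : Fin m,
        Nat.findGreatest (fun j' => b j' ≤ i.val) k = j.val ↔
        b j.val ≤ i.val ∧ i.val < b (j.val + 1) := by
      intro i
      constructor
      · intro h
        constructor
        · rw [← h]; exact hfspec i
        · by_contra hcon
          push_neg at hcon
          have : j.val + 1 ≤ Nat.findGreatest (fun j' => b j' ≤ i.val) k :=
            Nat.le_findGreatest j.isLt hcon
          omega
      · rintro ⟨h1, h2⟩
        have hge : j.val ≤ Nat.findGreatest (fun j' => b j' ≤ i.val) k :=
          Nat.le_findGreatest (le_of_lt j.isLt) h1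
        have hlt : Nat.findGreatest (fun j' => b j' ≤ i.val) k < j.val + 1 := by
          by_contra hcon
          push_neg at hcon
          have hb1 : b (j.val + 1) ≤ b (Nat.findGreatest (fun j' => b j' ≤ i.val) k) :=
            hbmono hcon
          have hb2 := hfspec i
          omega
        omega
    set S : Finset (Fin m) :=
      Finset.univ.filter (fun i => (⟨Nat.findGreatest (fun j' => b j' ≤ i.val) k,
        hf_lt i⟩ : Fin k) = j) with hSdef
    have hsum1 : ∑ p ∈ S.biUnion R, dist p c ^ z = ∑ i ∈ S, cost i := by
      apply Finset.sum_biUnion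
      intro a ha a' ha' haa
      exact hdisj a a' haa
    rw [hsum1]
    have hmem : ∀ i : Fin m, i ∈ S ↔ b j.val ≤ i.val ∧ i.val < b (j.val + 1) := by
      intro i
      rw [hSdef, Finset.mem_filter]
      simp only [Finset.mem_univ, true_and]
      rw [← hchar i]
      constructor
      · intro h; exact congrArg Fin.val h
      · intro h; exact Fin.ext h
    have hcw : ∑ i ∈ S, cost i = ∑ i ∈ S, w i.val :=
      Finset.sum_congr rfl fun i _ => by simp [hwdef, i.isLt]
    have hsum2 : ∑ i ∈ S, w i.val = ∑ n ∈ Finset.Ico (b j.val) (b (j.val + 1)), w n := by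
      rw [← Finset.sum_image (f := w) (g := Fin.val) (s := S)
        (fun x _ y _ h => Fin.ext h)]
      · apply Finset.sum_congr
        · ext n
          simp only [Finset.mem_image, Finset.mem_Ico]
          constructor
          · rintro ⟨i, hi, rfl⟩
            exact (hmem i).1 hi
          · rintro ⟨h1, h2⟩
            have hnm : n < m := lt_of_lt_of_le h2 (hble _)
            exact ⟨⟨n, hnm⟩, (hmem ⟨n, hnm⟩).2 ⟨h1, h2⟩, rfl⟩
        · intro n hn
          rfl
    rw [hcw, hsum2]
    have hjlt : b j.val < m := hklt j.val j.isLt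
    have hico : ∑ n ∈ Finset.Ico (b j.val) (b (j.val + 1)), w n
        = s (b (j.val + 1)) - s (b j.val) := by
      rw [hsdef]
      exact Finset.sum_Ico_eq_sub w (hb_mono_succ j.val)
    rw [hico]
    exact hnext_cost (b j.val) hjlt
end

section
/- Let ℱ = {f_x : X → ℝ≥0}_{x∈P} be a family of functions with shattering dimension sdim(ℱ) = t, where for c ∈ X, r ≥ 0, B_ℱ(c,r) = {f_x ∈ ℱ : f_x(c) ≤ r}. Define the k-extension ℱ^(k) = {f_x^(k) : X^k → ℝ≥0} by f_x^(k)(C) = min_{c∈C} f_x(c). Then sdim(ℱ^(k)) ≤ k · sdim(ℱ), i.e., for every H ⊆ ℱ^(k) with |H| ≥ 2, |{B_{ℱ^(k)}(C, r) ∩ H : C ∈ X^k, r ≥ 0}| ≤ |H|^(k·t). -/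
theorem sdim_k_extension
    {X P : Type*} (f : P → X → ℝ) (k t : ℕ) (ht : 1 ≤ t)
    (hsdim : ∀ H : Finset P, 2 ≤ H.card →
      Set.ncard {S : Set P | ∃ (c : X) (r : ℝ), 0 ≤ r ∧
        S = {x | x ∈ H ∧ f x c ≤ r}} ≤ H.card ^ t) :
    ∀ H : Finset P, 2 ≤ H.card →
      Set.ncard {S : Set P | ∃ (C : Fin k → X) (r : ℝ), 0 ≤ r ∧
        S = {x | x ∈ H ∧ sInf (Set.range fun i => f x (C i)) ≤ r}}
      ≤ H.card ^ (k * t) := by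
  classical
  intro H hH
  rcases Nat.eq_zero_or_pos k with hk | hk
  · -- k = 0 : every such set equals ↑H
    subst hk
    have hsub : {S : Set P | ∃ (C : Fin 0 → X) (r : ℝ), 0 ≤ r ∧
        S = {x | x ∈ H ∧ sInf (Set.range fun i => f x (C i)) ≤ r}} ⊆ {(↑H : Set P)} := by
      rintro S ⟨C, r, hr, rfl⟩
      simp only [Set.mem_singleton_iff]
      ext x
      simp [Set.range_eq_empty, Real.sInf_empty, hr]
    calc Set.ncard _ ≤ Set.ncard {(↑H : Set P)} :=
          Set.ncard_le_ncard hsub (Set.finite_singleton _)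
      _ ≤ 1 := by simp
      _ ≤ H.card ^ (0 * t) := by simp
  · -- k ≥ 1
    have hFinK : Nonempty (Fin k) := ⟨⟨0, hk⟩⟩
    set 𝒮 : Set (Set P) := {S : Set P | ∃ (c : X) (r : ℝ), 0 ≤ r ∧
        S = {x | x ∈ H ∧ f x c ≤ r}} with h𝒮
    have h𝒮fin : 𝒮.Finite := by
      apply Set.Finite.subset (H.finite_toSet.finite_subsets)
      rintro S ⟨c, r, hr, rfl⟩
      intro x hx; exact hx.1
    set F : Finset (Set P) := h𝒮fin.toFinset with hF
    set G : Finset (Set P) :=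
      (Fintype.piFinset fun _ : Fin k => F).image (fun g => ⋃ i, g i) with hG
    have hsub : {S : Set P | ∃ (C : Fin k → X) (r : ℝ), 0 ≤ r ∧
        S = {x | x ∈ H ∧ sInf (Set.range fun i => f x (C i)) ≤ r}} ⊆ ↑G := by
      rintro S ⟨C, r, hr, rfl⟩
      have key : ∀ x : P, sInf (Set.range fun i => f x (C i)) ≤ r ↔
          ∃ i, f x (C i) ≤ r := by
        intro x
        have hne : (Set.range fun i => f x (C i)).Nonempty := Set.range_nonempty _
        have hfin : (Set.range fun i => f x (C i)).Finite := Set.finite_range _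
        constructor
        · intro h
          obtain ⟨i, hi⟩ := hne.csInf_mem hfin
          exact ⟨i, hi.trans_le h⟩
        · rintro ⟨i, hi⟩
          exact le_trans (csInf_le hfin.bddBelow ⟨i, rfl⟩) hi
      refine Finset.mem_coe.mpr (Finset.mem_image.mpr
        ⟨fun i => {x | x ∈ H ∧ f x (C i) ≤ r}, ?_, ?_⟩)
      · rw [Fintype.mem_piFinset]
        intro i
        exact (Set.Finite.mem_toFinset _).mpr ⟨C i, r, hr, rfl⟩
      · ext x
        simp only [Set.mem_iUnion, Set.mem_setOf_eq, key x]
        tauto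
    have hcard : G.card ≤ F.card ^ k := by
      calc G.card ≤ (Fintype.piFinset fun _ : Fin k => F).card := Finset.card_image_le
        _ = F.card ^ k := by simp [Fintype.card_piFinset]
    have hFcard : F.card ≤ H.card ^ t := by
      rw [← Set.ncard_coe_finset F, hF, Set.Finite.coe_toFinset]
      exact hsdim H hH
    calc Set.ncard _ ≤ Set.ncard (↑G : Set (Set P)) :=
          Set.ncard_le_ncard hsub (Finset.finite_toSet _)
      _ = G.card := Set.ncard_coe_finset G
      _ ≤ F.card ^ k := hcard
      _ ≤ (H.card ^ t) ^ k := Nat.pow_le_pow_left hFcard k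
      _ = H.card ^ (k * t) := by rw [← pow_mul, Nat.mul_comm]
end
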